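/- Let V be a finite type of variables and let M, M' : V → ZFSet be assignments such that, for every nonempty subset W of V, the region R_W(M) is nonempty if and only if the region R_W(M') is nonempty. Then for all x, y, z : V, M x = M y \ M z holds if and only if M' x = M' y \ M' z holds. -/

import Mathlib

/-- The region `R_W(M)`: the collection of sets belonging to `M x` for every `x ∈ W`
and to no `M y` with `y ∉ W`. -/
def Region {V : Type*} (M : V → ZFSet) (W : Set V) : Set ZFSet :=
  {s | (∀ x ∈ W, s ∈ M x) ∧ ∀ y ∉ W, s ∉ M y}

lemma diff_iff_regions {V : Type*} (M : V → ZFSet) (x y z : V) :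
    M x = M y \ M z ↔
      ∀ W : Set V, W.Nonempty → (Region M W).Nonempty →
        (x ∈ W ↔ y ∈ W ∧ z ∉ W) := by
  constructor
  · intro heq W _ ⟨s, hs⟩
    have mem_iff : ∀ v : V, s ∈ M v ↔ v ∈ W := by
      intro v
      constructor
      · intro hv
        by_contra hvW
        exact hs.2 v hvW hv
      · intro hv
        exact hs.1 v hv
    have : s ∈ M x ↔ s ∈ M y ∧ s ∉ M z := by
      rw [heq, ZFSet.mem_sdiff]
    rw [mem_iff, mem_iff, mem_iff] at this
    exact this
  · intro hW
    ext s
    rw [ZFSet.mem_sdiff]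
    set W : Set V := {v | s ∈ M v} with hWdef
    have mem_iff : ∀ v : V, s ∈ M v ↔ v ∈ W := fun v => Iff.rfl
    rw [mem_iff, mem_iff, mem_iff]
    by_cases hne : W.Nonempty
    · have hreg : (Region M W).Nonempty := ⟨s, fun v hv => hv, fun v hv => hv⟩
      exact hW W hne hreg
    · rw [Set.not_nonempty_iff_eq_empty] at hne
      simp [hne]

theorem regions_determine_atoms {V : Type*} [Fintype V] (M M' : V → ZFSet)
    (h : ∀ W : Set V, W.Nonempty → ((Region M W).Nonempty ↔ (Region M' W).Nonempty)) :
    ∀ x y z : V, M x = M y \ M z ↔ M' x = M' y \ M' z := by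
  intro x y z
  rw [diff_iff_regions M x y z, diff_iff_regions M' x y z]
  constructor
  · intro H W hne hreg
    exact H W hne ((h W hne).mpr hreg)
  · intro H W hne hreg
    exact H W hne ((h W hne).mp hreg)
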